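/- Let U be a full triangulated subcategory of a triangulated category T. Then there exists a full subcategory V of T such that (U, V) is a stable t-structure on T if and only if the inclusion functor i : U → T has a right adjoint ρ : T → U. Moreover, in this case, setting δ = i∘ρ, one has U = Im(δ) and V = U^⊥ = Ker(δ). -/

import Mathlib

open CategoryTheory Limits Pretriangulated

universe v u

variable {C : Type u} [Category.{v} C] [HasZeroObject C] [HasShift C ℤ]
  [Preadditive C] [∀ n : ℤ, (shiftFunctor C n).Additive] [Pretriangulated C]

namespace CategoryTheory.Triangulated

/-- A triangulated subcategory (the structure `Triangulated.Subcategory` of the older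
Mathlib, restated with its old fields). -/
structure Subcategory (C : Type u) [Category.{v} C] [HasZeroObject C] [HasShift C ℤ]
    [Preadditive C] [∀ n : ℤ, (shiftFunctor C n).Additive] [Pretriangulated C] where
  P : C → Prop
  zero' : ∃ (Z : C) (_ : IsZero Z), P Z
  shift (X : C) (n : ℤ) : P X → P (X⟦n⟧)
  ext₂' (T : Triangle C) (_ : T ∈ distTriang C) : P T.obj₁ → P T.obj₃ →
    ObjectProperty.isoClosure P T.obj₂

end CategoryTheory.Triangulated

/-- A pair `(U, V)` of full triangulated subcategories of a triangulated category is a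
stable t-structure if `Hom(U, V) = 0` and every object `X` fits into a distinguished
triangle `U → X → V → U[1]` with `U ∈ U` and `V ∈ V`. -/
def IsStableTStructure (U V : Triangulated.Subcategory C) : Prop :=
  (∀ ⦃X Y : C⦄, U.P X → V.P Y → ∀ f : X ⟶ Y, f = 0) ∧
  (∀ X : C, ∃ (A B : C) (f : A ⟶ X) (g : X ⟶ B) (h : B ⟶ A⟦(1 : ℤ)⟧),
    (Triangle.mk f g h ∈ distTriang C) ∧ U.P A ∧ V.P B)

section Aux

variable (U : Triangulated.Subcategory C)

/-- composition with the counit is injective on morphisms from objects of `U`. -/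
lemma counit_comp_inj (ρ : C ⥤ ObjectProperty.FullSubcategory U.P)
    (adj : ObjectProperty.ι U.P ⊣ ρ) (W : ObjectProperty.FullSubcategory U.P) (X : C)
    (v₁ v₂ : W.obj ⟶ (ρ ⋙ ObjectProperty.ι U.P).obj X)
    (h : v₁ ≫ adj.counit.app X = v₂ ≫ adj.counit.app X) : v₁ = v₂ := by
  have hv₁ : W ⟶ ρ.obj X := ObjectProperty.homMk v₁
  have hv₂ : W ⟶ ρ.obj X := ObjectProperty.homMk v₂
  have h₁ : (adj.homEquiv W X).symm (ObjectProperty.homMk v₁ : W ⟶ ρ.obj X) =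
      (adj.homEquiv W X).symm (ObjectProperty.homMk v₂ : W ⟶ ρ.obj X) := by
    rw [Adjunction.homEquiv_counit, Adjunction.homEquiv_counit]
    exact h
  exact congrArg (fun t : W ⟶ ρ.obj X => t.hom) ((adj.homEquiv W X).symm.injective h₁)

/-- composition with the counit is surjective onto morphisms from objects of `U`. -/
lemma counit_comp_surj (ρ : C ⥤ ObjectProperty.FullSubcategory U.P)
    (adj : ObjectProperty.ι U.P ⊣ ρ) (W : ObjectProperty.FullSubcategory U.P) (X : C)
    (w : W.obj ⟶ X) :
    ∃ v : W.obj ⟶ (ρ ⋙ ObjectProperty.ι U.P).obj X,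
      v ≫ adj.counit.app X = w := by
  refine ⟨(ObjectProperty.ι U.P).map (adj.homEquiv W X w), ?_⟩
  have h2 : (adj.homEquiv W X).symm (adj.homEquiv W X w) = w :=
    (adj.homEquiv W X).symm_apply_apply w
  rw [Adjunction.homEquiv_counit] at h2
  exact h2

/-- The cone of the counit map lies in the right perpendicular category of `U`. -/
lemma cone_mem_perp (ρ : C ⥤ ObjectProperty.FullSubcategory U.P)
    (adj : ObjectProperty.ι U.P ⊣ ρ) (X B : C)
    (g : X ⟶ B) (h : B ⟶ ((ρ ⋙ ObjectProperty.ι U.P).obj X)⟦(1 : ℤ)⟧)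
    (hdist : Triangle.mk (adj.counit.app X) g h ∈ distTriang C) :
    ∀ Z : C, U.P Z → ∀ f : Z ⟶ B, f = 0 := by
  intro Z hZ f
  have h31 : h ≫ (adj.counit.app X)⟦(1 : ℤ)⟧' = 0 :=
    comp_distTriang_mor_zero₃₁ _ hdist
  have step1 : f ≫ h = 0 := by
    have hpf : (1 : ℤ) + (-1) = 0 := by norm_num
    set E := shiftFunctorCompIsoId C (1 : ℤ) (-1) hpf with hE
    have e1 : E.hom.app ((ρ ⋙ ObjectProperty.ι U.P).obj X) ≫ adj.counit.app X =
        (((adj.counit.app X)⟦(1 : ℤ)⟧')⟦(-1 : ℤ)⟧') ≫ E.hom.app X := by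
      simpa using (E.hom.naturality (adj.counit.app X)).symm
    have hv1 : ((f ≫ h)⟦(-1 : ℤ)⟧' ≫
          E.hom.app ((ρ ⋙ ObjectProperty.ι U.P).obj X)) ≫ adj.counit.app X =
        (0 : Z⟦(-1 : ℤ)⟧ ⟶ (ρ ⋙ ObjectProperty.ι U.P).obj X) ≫
          adj.counit.app X := by
      rw [Category.assoc, e1, ← Category.assoc, ← Functor.map_comp, Category.assoc,
        h31, comp_zero, Functor.map_zero, zero_comp, zero_comp]
    have v1eq : (f ≫ h)⟦(-1 : ℤ)⟧' ≫
        E.hom.app ((ρ ⋙ ObjectProperty.ι U.P).obj X) = 0 :=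
      counit_comp_inj U ρ adj ⟨Z⟦(-1 : ℤ)⟧, U.shift Z (-1) hZ⟩ X _ _ hv1
    have hm : (f ≫ h)⟦(-1 : ℤ)⟧' = 0 := by
      have hc : (f ≫ h)⟦(-1 : ℤ)⟧' ≫
          E.hom.app ((ρ ⋙ ObjectProperty.ι U.P).obj X) =
          0 ≫ E.hom.app ((ρ ⋙ ObjectProperty.ι U.P).obj X) := by
        rw [v1eq, zero_comp]
      exact (cancel_mono _).mp hc
    apply (shiftFunctor C (-1 : ℤ)).map_injective
    rw [Functor.map_zero]
    exact hm
  obtain ⟨w, hw⟩ := Triangle.coyoneda_exact₃ _ hdist f step1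
  have hw' : f = w ≫ g := hw
  obtain ⟨v, hv⟩ := counit_comp_surj U ρ adj ⟨Z, hZ⟩ X w
  have h12 : adj.counit.app X ≫ g = 0 := comp_distTriang_mor_zero₁₂ _ hdist
  calc f = w ≫ g := hw'
    _ = (v ≫ adj.counit.app X) ≫ g := (congrArg (· ≫ g) hv).symm
    _ = 0 := by rw [Category.assoc, h12, comp_zero]

/-- The key bijection coming from a stable t-structure. -/
lemma tstr_bij {V : Triangulated.Subcategory C} (hUV : IsStableTStructure U V)
    {A X B : C} {f : A ⟶ X} {g : X ⟶ B} {h : B ⟶ A⟦(1 : ℤ)⟧}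
    (hdist : Triangle.mk f g h ∈ distTriang C) (hB : V.P B)
    (W : C) (hW : U.P W) :
    Function.Bijective (fun v : W ⟶ A => v ≫ f) := by
  constructor
  · intro v₁ v₂ hv
    have hv' : v₁ ≫ f = v₂ ≫ f := hv
    have hd : (v₁ - v₂) ≫ f = 0 := by
      rw [Preadditive.sub_comp, hv', sub_self]
    obtain ⟨w, hwEq⟩ := Triangle.coyoneda_exact₂ (Triangle.mk f g h).invRotate
      (inv_rot_of_distTriang _ hdist) (v₁ - v₂) hd
    have hw0 : w = 0 := hUV.1 hW (V.shift B (-1) hB) w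
    rw [hw0, zero_comp] at hwEq
    exact sub_eq_zero.mp hwEq
  · intro u
    have hu : u ≫ g = 0 := hUV.1 hW hB (u ≫ g)
    obtain ⟨v, hv⟩ := Triangle.coyoneda_exact₂ _ hdist u hu
    exact ⟨v, hv.symm⟩

end Aux

/-- Miyachi's theorem: for a full triangulated subcategory `U` of a triangulated
category `T`, there is a full subcategory `V` with `(U, V)` a stable t-structure iff the
inclusion `i : U → T` admits a right adjoint `ρ`. Moreover, in that case, with
`δ = i ∘ ρ`, one has `U = Im(δ)` and `V = U^⊥ = Ker(δ)`. -/
theorem stmt16 (U : Triangulated.Subcategory C)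
    (hUiso : ∀ ⦃X Y : C⦄, (X ≅ Y) → U.P X → U.P Y) :
    ((∃ V : Triangulated.Subcategory C, IsStableTStructure U V) ↔
      (ObjectProperty.ι U.P).IsLeftAdjoint) ∧
    (∀ (V : Triangulated.Subcategory C), IsStableTStructure U V →
      (∀ ⦃X Y : C⦄, (X ≅ Y) → V.P X → V.P Y) →
      ∀ (ρ : C ⥤ ObjectProperty.FullSubcategory U.P) (_ : ObjectProperty.ι U.P ⊣ ρ),
        (∀ X : C, U.P X ↔
          ∃ Y : C, Nonempty ((ρ ⋙ ObjectProperty.ι U.P).obj Y ≅ X)) ∧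
        (∀ X : C, V.P X ↔ ∀ (Z : C), U.P Z → ∀ f : Z ⟶ X, f = 0) ∧
        (∀ X : C, V.P X ↔ IsZero ((ρ ⋙ ObjectProperty.ι U.P).obj X))) := by
  constructor
  · constructor
    · rintro ⟨V, hUV⟩
      choose A B ff gg hh hdist hA hB using hUV.2
      have bij : ∀ (X : ObjectProperty.FullSubcategory U.P) (Y : C),
          Function.Bijective (fun v : X ⟶ (⟨A Y, hA Y⟩ : ObjectProperty.FullSubcategory U.P) =>
            (ObjectProperty.ι U.P).map v ≫ ff Y) := by
        intro X Y
        exact (tstr_bij U hUV (hdist Y) (hB Y) X.obj X.property).comp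
          ((ObjectProperty.fullyFaithfulι U.P).map_bijective X ⟨A Y, hA Y⟩)
      let e : ∀ (X : ObjectProperty.FullSubcategory U.P) (Y : C),
          ((ObjectProperty.ι U.P).obj X ⟶ Y) ≃
            (X ⟶ (⟨A Y, hA Y⟩ : ObjectProperty.FullSubcategory U.P)) :=
        fun X Y => (Equiv.ofBijective _ (bij X Y)).symm
      have he : ∀ (X' X : ObjectProperty.FullSubcategory U.P) (Y : C) (q : X' ⟶ X)
          (w : (ObjectProperty.ι U.P).obj X ⟶ Y),
          e X' Y ((ObjectProperty.ι U.P).map q ≫ w) = q ≫ e X Y w := by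
        intro X' X Y q w
        apply (Equiv.ofBijective _ (bij X' Y)).injective
        simp only [e]
        rw [Equiv.apply_symm_apply]
        show (ObjectProperty.ι U.P).map q ≫ w =
          (ObjectProperty.ι U.P).map (q ≫ e X Y w) ≫ ff Y
        rw [Functor.map_comp, Category.assoc]
        congr 1
        exact (Equiv.apply_symm_apply (Equiv.ofBijective _ (bij X Y)) w).symm
      exact ⟨⟨Adjunction.rightAdjointOfEquiv e he,
        ⟨Adjunction.adjunctionOfEquivRight e he⟩⟩⟩
    · intro hadj
      obtain ⟨ρ, ⟨adj⟩⟩ := hadj.exists_rightAdjoint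
      refine ⟨Triangulated.Subcategory.mk
        (fun X => ∀ Z : C, U.P Z → ∀ f : Z ⟶ X, f = 0) ⟨_, isZero_zero C, ?_⟩ ?_ ?_, ?_, ?_⟩
      · intro Z hZ f
        exact (isZero_zero C).eq_of_tgt f 0
      · intro X n hX Z hZ f
        have hpf : n + (-n) = 0 := by ring
        have hsh : (shiftFunctor C (-n)).map f ≫
            (shiftFunctorCompIsoId C n (-n) hpf).hom.app X = 0 :=
          hX _ (U.shift Z (-n) hZ) _
        have : (shiftFunctor C (-n)).map f = 0 := by
          have hc : (shiftFunctor C (-n)).map f ≫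
              (shiftFunctorCompIsoId C n (-n) hpf).hom.app X =
              0 ≫ (shiftFunctorCompIsoId C n (-n) hpf).hom.app X := by
            rw [hsh, zero_comp]
          exact (cancel_mono _).mp hc
        apply (shiftFunctor C (-n)).map_injective
        rw [this, Functor.map_zero]
      · intro T hT h₁ h₃
        refine ObjectProperty.le_isoClosure _ _ ?_
        intro Z hZ f
        have hf2 : f ≫ T.mor₂ = 0 := h₃ Z hZ _
        obtain ⟨w, hwEq⟩ := Triangle.coyoneda_exact₂ T hT f hf2
        rw [hwEq, h₁ Z hZ w, zero_comp]
      · intro X Y hX hY f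
        exact hY X hX f
      · intro X
        obtain ⟨B, g, h, hdist⟩ := distinguished_cocone_triangle (adj.counit.app X)
        exact ⟨(ρ ⋙ ObjectProperty.ι U.P).obj X, B, adj.counit.app X, g, h,
          hdist, (ρ.obj X).property, cone_mem_perp U ρ adj X B g h hdist⟩
  · intro V hUV hViso ρ adj
    have hperp : ∀ X : C, V.P X ↔ ∀ Z : C, U.P Z → ∀ f : Z ⟶ X, f = 0 := by
      intro X
      constructor
      · intro hX Z hZ f
        exact hUV.1 hZ hX f
      · intro hp
        obtain ⟨A, B, f, g, h, hdist, hA, hB⟩ := hUV.2 X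
        have hf : f = 0 := hp A hA f
        have hid : 𝟙 (A⟦(1 : ℤ)⟧) = 0 := by
          obtain ⟨s, hs⟩ := Triangle.coyoneda_exact₃ (Triangle.mk f g h).rotate
            (rot_of_distTriang _ hdist) (𝟙 (A⟦(1 : ℤ)⟧)) (by
              show 𝟙 (A⟦(1 : ℤ)⟧) ≫ (-(f⟦(1 : ℤ)⟧')) = 0
              rw [hf, Functor.map_zero, neg_zero, comp_zero])
          have hs' : 𝟙 (A⟦(1 : ℤ)⟧) = s ≫ h := hs
          have hs0 : s = 0 := hUV.1 (U.shift A 1 hA) hB s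
          rw [hs', hs0]
          exact zero_comp
        have hh : h = 0 := by
          rw [← Category.comp_id h, hid, comp_zero]
        obtain ⟨r0, hr⟩ := Triangle.yoneda_exact₂ _ hdist (𝟙 X) (by
          show f ≫ 𝟙 X = 0
          rw [hf, zero_comp])
        let r : B ⟶ X := r0
        have hr' : 𝟙 X = g ≫ r := hr
        have hrg : r ≫ g = 𝟙 B := by
          have hgu : g ≫ (𝟙 B - r ≫ g) = 0 := by
            rw [Preadditive.comp_sub, Category.comp_id, ← Category.assoc, ← hr',
              Category.id_comp, sub_self]
          obtain ⟨w0, hwEq⟩ := Triangle.yoneda_exact₃ _ hdist (𝟙 B - r ≫ g) hgu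
          let w : A⟦(1 : ℤ)⟧ ⟶ B := w0
          have hwEq' : 𝟙 B - r ≫ g = h ≫ w := hwEq
          rw [hh, zero_comp, sub_eq_zero] at hwEq'
          exact hwEq'.symm
        exact hViso (Iso.mk g r hr'.symm hrg).symm hB
    refine ⟨?_, hperp, ?_⟩
    · intro X
      constructor
      · intro hX
        have h1 : (ObjectProperty.ι U.P).map (adj.unit.app ⟨X, hX⟩) ≫
            adj.counit.app X = 𝟙 X := adj.left_triangle_components ⟨X, hX⟩
        have h2 : adj.counit.app X ≫
            (ObjectProperty.ι U.P).map (adj.unit.app ⟨X, hX⟩) =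
            𝟙 ((ρ ⋙ ObjectProperty.ι U.P).obj X) := by
          apply counit_comp_inj U ρ adj (ρ.obj X) X
          rw [Category.assoc, h1]
          simp
        exact ⟨X, ⟨Iso.mk (adj.counit.app X)
          ((ObjectProperty.ι U.P).map (adj.unit.app ⟨X, hX⟩)) h2 h1⟩⟩
      · rintro ⟨Y, ⟨iso⟩⟩
        exact hUiso iso (ρ.obj Y).property
    · intro X
      constructor
      · intro hX
        have hε : adj.counit.app X = 0 := hUV.1 (ρ.obj X).property hX _
        rw [IsZero.iff_id_eq_zero]
        apply counit_comp_inj U ρ adj (ρ.obj X) X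
        rw [hε, comp_zero, comp_zero]
      · intro hz
        rw [hperp X]
        intro Z hZ f
        have hε : adj.counit.app X = 0 := hz.eq_of_src _ _
        obtain ⟨v, hv⟩ := counit_comp_surj U ρ adj ⟨Z, hZ⟩ X f
        rw [← hv, hε, comp_zero]
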